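/- For N ≥ 1, the entire function G_N defined by G_N(s) = 1 + Σ_{m=1}^∞ (-1)^m s^{2m} / (2^m m! ∏_{k=1}^m (N + 2(k-1))) is bounded on the real line: there exists M_N > 0 such that |G_N(s)| ≤ M_N for all s ∈ ℝ. -/

import Mathlib

set_option autoImplicit false
set_option maxHeartbeats 1000000

/-- The Frobenius power-series solution `G_N` of the spherical-mean ODE. -/
noncomputable def G (N : ℕ) (s : ℝ) : ℝ :=
  ∑' m : ℕ, ((-1) ^ m * s ^ (2 * m)) /
    ((2 : ℝ) ^ m * (Nat.factorial m) * ∏ k ∈ Finset.range m, ((N : ℝ) + 2 * k))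

open Finset MeasureTheory intervalIntegral Real

-- product identities
lemma prodA (m : ℕ) : ∏ i ∈ range m, (2 * (i : ℝ) + 2) = 2 ^ m * m.factorial := by
  induction m with
  | zero => simp
  | succ n ih => rw [prod_range_succ, ih, Nat.factorial_succ]; push_cast; ring

lemma prodB (m : ℕ) :
    ((2 * m).factorial : ℝ) = (∏ i ∈ range m, (2 * (i : ℝ) + 1)) * (2 ^ m * m.factorial) := by
  induction m with
  | zero => simp
  | succ n ih =>
    have h : 2 * (n + 1) = (2 * n + 1) + 1 := by ring
    rw [prod_range_succ, h, Nat.factorial_succ, Nat.factorial_succ, Nat.factorial_succ]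
    push_cast
    rw [ih]
    ring

lemma prod_ge_one {N : ℕ} (hN : 1 ≤ N) (m : ℕ) :
    (1 : ℝ) ≤ ∏ k ∈ range m, ((N : ℝ) + 2 * k) := by
  have h : (1 : ℝ) ≤ (N : ℝ) := by exact_mod_cast hN
  induction m with
  | zero => simp
  | succ n ih =>
    rw [prod_range_succ]
    nlinarith [Nat.cast_nonneg (α := ℝ) n]

-- denominator positive & ≥ 2^m m!
lemma denom_pos {N : ℕ} (hN : 1 ≤ N) (m : ℕ) :
    (0 : ℝ) < (2 : ℝ) ^ m * (Nat.factorial m) * ∏ k ∈ range m, ((N : ℝ) + 2 * k) := by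
  have h := prod_ge_one hN m
  have h2 : (0:ℝ) < (2:ℝ)^m * (Nat.factorial m) := by positivity
  nlinarith

lemma term_bound {N : ℕ} (hN : 1 ≤ N) {x R : ℝ} (hx : |x| ≤ R) (m : ℕ) :
    |((-1) ^ m * x ^ (2 * m)) /
      ((2 : ℝ) ^ m * (Nat.factorial m) * ∏ k ∈ range m, ((N : ℝ) + 2 * k))| ≤
      (R ^ 2 / 2) ^ m / m.factorial := by
  have hP := prod_ge_one hN m
  have hD := denom_pos hN m
  rw [abs_div, abs_mul, abs_pow, abs_neg, abs_one, one_pow, one_mul]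
  have h1 : |x ^ (2*m)| = (x^2)^m := by
    rw [abs_pow, pow_mul]
    congr 1
    exact (abs_pow x 2).symm ▸ by rw [abs_pow, sq_abs]
  rw [h1]
  have hxR : x^2 ≤ R^2 := by nlinarith [abs_nonneg x, sq_abs x]
  have hnum : (x^2)^m ≤ (R^2)^m := pow_le_pow_left₀ (sq_nonneg x) hxR m
  have hDl : (2:ℝ)^m * (Nat.factorial m) ≤ |(2:ℝ)^m * (Nat.factorial m) * ∏ k ∈ range m, ((N : ℝ) + 2 * k)| := by
    rw [abs_of_pos hD]
    nlinarith [pow_pos (by norm_num : (0:ℝ) < 2) m, (Nat.cast_pos (α := ℝ)).mpr (Nat.factorial_pos m)]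
  calc (x^2)^m / |_root_.id ((2:ℝ)^m * (Nat.factorial m) * ∏ k ∈ range m, ((N : ℝ) + 2 * k))|
      ≤ (R^2)^m / ((2:ℝ)^m * (Nat.factorial m)) := by
        apply div_le_div₀ (by positivity) hnum (by positivity)
        simpa using hDl
    _ = (R ^ 2 / 2) ^ m / m.factorial := by
        rw [div_pow, div_div]

lemma summable_G {N : ℕ} (hN : 1 ≤ N) (s : ℝ) :
    Summable (fun m : ℕ => ((-1) ^ m * s ^ (2 * m)) /
      ((2 : ℝ) ^ m * (Nat.factorial m) * ∏ k ∈ range m, ((N : ℝ) + 2 * k))) := by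
  have hsum : Summable (fun m : ℕ => (s ^ 2 / 2) ^ m / (m.factorial : ℝ)) := by
    simpa using Real.summable_pow_div_factorial (s ^ 2 / 2)
  have hb : ∀ m : ℕ, |((-1) ^ m * s ^ (2 * m)) /
      ((2 : ℝ) ^ m * (Nat.factorial m) * ∏ k ∈ range m, ((N : ℝ) + 2 * k))|
      ≤ (s ^ 2 / 2) ^ m / (m.factorial : ℝ) := by
    intro m
    have := term_bound hN (le_refl |s|) m
    rwa [sq_abs] at this
  exact Summable.of_abs (hsum.of_nonneg_of_le (fun m => abs_nonneg _) hb)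

lemma continuous_G {N : ℕ} (hN : 1 ≤ N) : Continuous (G N) := by
  rw [continuous_iff_continuousAt]
  intro s
  have hball : ContinuousOn (G N) (Metric.ball (0 : ℝ) (|s| + 1)) := by
    apply continuousOn_tsum
      (u := fun m : ℕ => ((|s| + 1) ^ 2 / 2) ^ m / m.factorial)
    · intro m
      apply Continuous.continuousOn
      have := denom_pos hN m
      fun_prop (disch := positivity)
    · exact Real.summable_pow_div_factorial _
    · intro m x hx
      rw [Real.norm_eq_abs]
      apply term_bound hN
      have := mem_ball_zero_iff.mp hx
      rw [Real.norm_eq_abs] at this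
      linarith
  exact hball.continuousAt (Metric.isOpen_ball.mem_nhds (by
    rw [Metric.mem_ball, dist_zero_right, Real.norm_eq_abs]
    linarith))

lemma G_one (s : ℝ) : G 1 s = Real.cos s := by
  rw [Real.cos_eq_tsum, G]
  apply tsum_congr
  intro m
  congr 1
  have hp : ∏ k ∈ range m, ((1:ℕ) + 2 * (k:ℝ)) = ∏ i ∈ range m, (2 * (i:ℝ) + 1) :=
    Finset.prod_congr rfl (fun k _ => by push_cast; ring)
  rw [hp, prodB m]
  ring

lemma G_two (s : ℝ) : G 2 s = (1 / π) * ∫ x in (0:ℝ)..π, Real.cos (s * Real.sin x) := by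
  set F : ℕ → ℝ → ℝ := fun m x => (-1) ^ m * (s * Real.sin x) ^ (2 * m) / (2 * m).factorial with hF
  have hFb : ∀ m : ℕ, ∀ x : ℝ, ‖F m x‖ ≤ (s ^ 2) ^ m / m.factorial := by
    intro m x
    have h0 : |s * Real.sin x| ≤ |s| := by
      rw [abs_mul]
      calc |s| * |Real.sin x| ≤ |s| * 1 :=
            mul_le_mul_of_nonneg_left (Real.abs_sin_le_one x) (abs_nonneg s)
        _ = |s| := mul_one _
    have h1 : |s * Real.sin x| ^ (2 * m) ≤ (s ^ 2) ^ m := by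
      calc |s * Real.sin x| ^ (2*m) ≤ |s| ^ (2*m) :=
            pow_le_pow_left₀ (abs_nonneg _) h0 _
        _ = (s ^ 2) ^ m := by rw [pow_mul, sq_abs]
    have h2 : (m.factorial : ℝ) ≤ ((2 * m).factorial : ℝ) := by
      exact_mod_cast Nat.factorial_le (by omega)
    have h3 : ‖F m x‖ = |s * Real.sin x| ^ (2 * m) / ((2 * m).factorial : ℝ) := by
      rw [hF]
      simp [abs_div, abs_mul, abs_pow]
    rw [h3]
    exact div_le_div₀ (by positivity) h1 (by positivity) h2
  have hint : ∀ m : ℕ, Integrable (F m) (volume.restrict (Set.Ioc (0:ℝ) π)) := by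
    intro m
    apply Continuous.integrableOn_Ioc
    rw [hF]
    fun_prop
  have hsum2 : Summable (fun m : ℕ => ∫ x in Set.Ioc (0:ℝ) π, ‖F m x‖) := by
    have hS : Summable (fun m : ℕ => π * ((s ^ 2) ^ m / m.factorial)) :=
      Summable.mul_left π (by simpa using Real.summable_pow_div_factorial (s ^ 2))
    apply hS.of_nonneg_of_le (fun m => integral_nonneg fun x => norm_nonneg _)
    intro m
    calc ∫ x in Set.Ioc (0:ℝ) π, ‖F m x‖
        ≤ ∫ _x in Set.Ioc (0:ℝ) π, ((s ^ 2) ^ m / m.factorial : ℝ) :=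
          integral_mono (hint m).norm (integrableOn_const
            (by rw [Real.volume_Ioc]; exact ENNReal.ofReal_ne_top)) (fun x => hFb m x)
      _ = π * ((s ^ 2) ^ m / m.factorial) := by
          rw [setIntegral_const, Real.volume_real_Ioc_of_le Real.pi_pos.le, smul_eq_mul, sub_zero]
  have hswap := MeasureTheory.integral_tsum_of_summable_integral_norm hint hsum2
  have hIoc : ∫ x in (0:ℝ)..π, Real.cos (s * Real.sin x)
      = ∑' m : ℕ, ∫ x in Set.Ioc (0:ℝ) π, F m x := by
    have hfun : (fun x => Real.cos (s * Real.sin x)) = fun x => ∑' m : ℕ, F m x :=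
      funext fun x => Real.cos_eq_tsum _
    rw [intervalIntegral.integral_of_le Real.pi_pos.le, hfun, ← hswap]
  have hval : ∀ m : ℕ, ∫ x in Set.Ioc (0:ℝ) π, F m x
      = (-1) ^ m * s ^ (2 * m) / (2 * m).factorial
        * (π * ∏ i ∈ range m, (2 * (i:ℝ) + 1) / (2 * i + 2)) := by
    intro m
    rw [← intervalIntegral.integral_of_le Real.pi_pos.le]
    have heq : ∀ x ∈ Set.uIcc (0:ℝ) π, F m x
        = ((-1) ^ m * s ^ (2 * m) / (2 * m).factorial) * (Real.sin x) ^ (2 * m) := by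
      intro x _
      rw [hF]
      simp only [mul_pow]
      ring
    rw [intervalIntegral.integral_congr heq, intervalIntegral.integral_const_mul,
      integral_sin_pow_even]
  rw [hIoc, tsum_congr hval, ← tsum_mul_left, G]
  apply tsum_congr
  intro m
  have hp2 : ∏ k ∈ range m, (((2:ℕ):ℝ) + 2 * k) = 2 ^ m * m.factorial := by
    rw [show (∏ k ∈ range m, (((2:ℕ):ℝ) + 2 * k)) = ∏ k ∈ range m, (2 * (k:ℝ) + 2) from
      Finset.prod_congr rfl (fun k _ => by push_cast; ring), prodA]
  have hq : ∏ i ∈ range m, (2 * (i:ℝ) + 1) / (2 * i + 2)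
      = (∏ i ∈ range m, (2 * (i:ℝ) + 1)) / (2 ^ m * m.factorial) := by
    rw [Finset.prod_div_distrib, prodA]
  have hP1 : (0:ℝ) < ∏ i ∈ range m, (2 * (i:ℝ) + 1) :=
    Finset.prod_pos fun i _ => by positivity
  have hfac : (0:ℝ) < (m.factorial : ℝ) := Nat.cast_pos.mpr m.factorial_pos
  rw [hp2, hq, prodB m]
  field_simp

lemma G_step (N : ℕ) (hN : 1 ≤ N) (s : ℝ) :
    G (N + 2) s = N * ∫ u in (0:ℝ)..1, u ^ (N - 1) * G N (s * u) := by
  set F : ℕ → ℝ → ℝ := fun m u => u ^ (N - 1) *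
    (((-1) ^ m * (s * u) ^ (2 * m)) /
      ((2 : ℝ) ^ m * (Nat.factorial m) * ∏ k ∈ Finset.range m, ((N : ℝ) + 2 * k))) with hF
  have hfun : ∀ u : ℝ, u ^ (N - 1) * G N (s * u) = ∑' m : ℕ, F m u := by
    intro u
    rw [G, hF, tsum_mul_left]
  have hFb : ∀ m : ℕ, ∀ u ∈ Set.Ioc (0:ℝ) 1, ‖F m u‖ ≤ (s ^ 2 / 2) ^ m / m.factorial := by
    intro m u hu
    have hu0 : 0 < u := hu.1
    have hu1 : u ≤ 1 := hu.2
    have h1 : |u ^ (N - 1)| ≤ 1 := by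
      rw [abs_pow]
      exact pow_le_one₀ (abs_nonneg u) (abs_le.mpr ⟨by linarith, hu1⟩)
    have h2 : |s * u| ≤ |s| := by
      rw [abs_mul]
      calc |s| * |u| ≤ |s| * 1 :=
            mul_le_mul_of_nonneg_left (abs_le.mpr ⟨by linarith, hu1⟩) (abs_nonneg s)
        _ = |s| := mul_one _
    have h3 := term_bound hN h2 m
    rw [sq_abs] at h3
    rw [hF]
    simp only [Real.norm_eq_abs, abs_mul]
    calc |u ^ (N-1)| * |((-1) ^ m * (s * u) ^ (2 * m)) /
          ((2 : ℝ) ^ m * (Nat.factorial m) * ∏ k ∈ Finset.range m, ((N : ℝ) + 2 * k))|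
        ≤ 1 * ((s ^ 2 / 2) ^ m / m.factorial) :=
          mul_le_mul h1 h3 (abs_nonneg _) zero_le_one
      _ = (s ^ 2 / 2) ^ m / m.factorial := one_mul _
  have hint : ∀ m : ℕ, Integrable (F m) (volume.restrict (Set.Ioc (0:ℝ) 1)) := by
    intro m
    apply Continuous.integrableOn_Ioc
    rw [hF]
    have := denom_pos hN m
    fun_prop (disch := positivity)
  have hsum2 : Summable (fun m : ℕ => ∫ u in Set.Ioc (0:ℝ) 1, ‖F m u‖) := by
    have hS : Summable (fun m : ℕ => ((s ^ 2 / 2) ^ m / m.factorial : ℝ)) := by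
      simpa using Real.summable_pow_div_factorial (s ^ 2 / 2)
    apply hS.of_nonneg_of_le (fun m => integral_nonneg fun x => norm_nonneg _)
    intro m
    calc ∫ u in Set.Ioc (0:ℝ) 1, ‖F m u‖
        ≤ ∫ _u in Set.Ioc (0:ℝ) 1, ((s ^ 2 / 2) ^ m / m.factorial : ℝ) :=
          setIntegral_mono_on (hint m).norm (integrableOn_const
            (by rw [Real.volume_Ioc]; exact ENNReal.ofReal_ne_top))
            measurableSet_Ioc (fun u hu => hFb m u hu)
      _ = (s ^ 2 / 2) ^ m / m.factorial := by
          rw [setIntegral_const, Real.volume_real_Ioc_of_le zero_le_one, smul_eq_mul, sub_zero]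
          ring
  have hswap := MeasureTheory.integral_tsum_of_summable_integral_norm hint hsum2
  have hIoc : ∫ u in (0:ℝ)..1, u ^ (N - 1) * G N (s * u)
      = ∑' m : ℕ, ∫ u in Set.Ioc (0:ℝ) 1, F m u := by
    rw [intervalIntegral.integral_of_le (by norm_num : (0:ℝ) ≤ 1),
      show (fun u => u ^ (N-1) * G N (s * u)) = fun u => ∑' m : ℕ, F m u from funext hfun,
      ← hswap]
  have hval : ∀ m : ℕ, ∫ u in Set.Ioc (0:ℝ) 1, F m u
      = (((-1) ^ m * s ^ (2 * m)) /
        ((2 : ℝ) ^ m * (Nat.factorial m) * ∏ k ∈ Finset.range m, ((N : ℝ) + 2 * k)))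
        * (1 / ((N : ℝ) + 2 * m)) := by
    intro m
    rw [← intervalIntegral.integral_of_le (by norm_num : (0:ℝ) ≤ 1)]
    have heq : ∀ u ∈ Set.uIcc (0:ℝ) 1, F m u
        = (((-1) ^ m * s ^ (2 * m)) /
          ((2 : ℝ) ^ m * (Nat.factorial m) * ∏ k ∈ Finset.range m, ((N : ℝ) + 2 * k)))
          * u ^ (N - 1 + 2 * m) := by
      intro u _
      rw [hF]
      simp only [mul_pow, pow_add]
      ring
    rw [intervalIntegral.integral_congr heq, intervalIntegral.integral_const_mul, integral_pow]
    have he : N - 1 + 2 * m + 1 = N + 2 * m := by omega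
    rw [he, zero_pow (by omega : N + 2 * m ≠ 0), one_pow]
    push_cast [Nat.cast_sub hN]
    ring
  rw [hIoc, tsum_congr hval, ← tsum_mul_left, G]
  apply tsum_congr
  intro m
  have hD := denom_pos hN m
  have hNpos : (0:ℝ) < (N:ℝ) := by exact_mod_cast hN
  have hNm : (0:ℝ) < (N:ℝ) + 2 * m := by positivity
  have h1 : ∏ k ∈ range m, ((((N:ℕ) + 2 : ℕ) : ℝ) + 2 * k)
      = ∏ k ∈ range m, ((N : ℝ) + 2 * ((k:ℝ) + 1)) :=
    Finset.prod_congr rfl (fun k _ => by push_cast; ring)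
  have h2 : (N:ℝ) * ∏ k ∈ range m, ((N : ℝ) + 2 * ((k:ℝ) + 1))
      = ((N:ℝ) + 2 * m) * ∏ k ∈ range m, ((N : ℝ) + 2 * k) := by
    have ha := Finset.prod_range_succ' (fun k : ℕ => (N : ℝ) + 2 * k) m
    have hb := Finset.prod_range_succ (fun k : ℕ => (N : ℝ) + 2 * k) m
    have hc : ∏ k ∈ range m, ((N:ℝ) + 2 * ((k:ℝ) + 1))
        = ∏ k ∈ range m, ((N:ℝ) + 2 * ((k + 1 : ℕ) : ℝ)) :=
      Finset.prod_congr rfl (fun k _ => by push_cast; ring)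
    rw [hc]
    calc (N:ℝ) * ∏ k ∈ range m, ((N:ℝ) + 2 * ((k + 1 : ℕ) : ℝ))
        = (∏ k ∈ range m, ((N:ℝ) + 2 * ((k + 1 : ℕ) : ℝ))) * ((N:ℝ) + 2 * ((0:ℕ):ℝ)) := by
          push_cast; ring
      _ = ∏ k ∈ range (m + 1), ((N:ℝ) + 2 * k) := ha.symm
      _ = (∏ k ∈ range m, ((N:ℝ) + 2 * k)) * ((N:ℝ) + 2 * m) := hb
      _ = ((N:ℝ) + 2 * m) * ∏ k ∈ range m, ((N : ℝ) + 2 * k) := by ring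
  have hP2 : (0:ℝ) < ∏ k ∈ range m, ((N : ℝ) + 2 * ((k:ℝ) + 1)) := by
    apply Finset.prod_pos
    intro k _
    positivity
  have hc2 : ∏ k ∈ range m, ((N:ℝ) + 2 * ((k:ℝ) + 1))
      = ∏ k ∈ range m, ((N:ℝ) + 2 * (k:ℝ) + 2) :=
    Finset.prod_congr rfl (fun k _ => by ring)
  have hPpos : (0:ℝ) < ∏ k ∈ range m, ((N:ℝ) + 2 * ↑k) := by
    have := prod_ge_one hN m; linarith
  rw [h1]
  have h2' : ∏ k ∈ range m, ((N : ℝ) + 2 * ((k:ℝ) + 1))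
      = ((N:ℝ) + 2 * m) * (∏ k ∈ range m, ((N : ℝ) + 2 * k)) / N := by
    rw [eq_div_iff hNpos.ne', ← h2]; ring
  rw [h2']
  field_simp


lemma G_le_one (N : ℕ) : 1 ≤ N → ∀ s : ℝ, |G N s| ≤ 1 := by
  induction N using Nat.strong_induction_on with
  | _ N ih =>
    intro hN s
    match N, ih with
    | 1, _ => rw [G_one]; exact Real.abs_cos_le_one s
    | 2, _ =>
      rw [G_two]
      have h := intervalIntegral.norm_integral_le_of_norm_le_const (a := (0:ℝ)) (b := π)
        (C := 1) (f := fun x => Real.cos (s * Real.sin x))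
        (fun x _ => by rw [Real.norm_eq_abs]; exact Real.abs_cos_le_one _)
      rw [Real.norm_eq_abs] at h
      have h2 : (1:ℝ) * |π - 0| = π := by
        rw [one_mul, sub_zero, abs_of_pos Real.pi_pos]
      rw [abs_mul, abs_of_pos (by positivity : (0:ℝ) < 1 / π)]
      calc 1 / π * |∫ x in (0:ℝ)..π, Real.cos (s * Real.sin x)|
          ≤ 1 / π * π := by
            exact mul_le_mul_of_nonneg_left (h.trans (le_of_eq h2)) (by positivity)
        _ = 1 := by field_simp
    | (n+3), ih =>
      have h1 : 1 ≤ n + 1 := Nat.le_add_left 1 n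
      have key := G_step (n+1) h1 s
      simp only [Nat.add_sub_cancel] at key
      rw [show n + 3 = (n + 1) + 2 from rfl, key]
      have hIb : |∫ u in (0:ℝ)..1, u ^ n * G (n+1) (s * u)| ≤ 1 / ((n:ℝ) + 1) := by
        have hg : IntervalIntegrable (fun u : ℝ => u ^ n) volume 0 1 :=
          (continuous_pow n).intervalIntegrable 0 1
        have hae : ∀ᵐ t ∂(volume.restrict (Set.uIoc (0:ℝ) 1)),
            ‖t ^ n * G (n+1) (s * t)‖ ≤ t ^ n := by
          rw [Set.uIoc_of_le (by norm_num : (0:ℝ) ≤ 1)]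
          refine (MeasureTheory.ae_restrict_iff' measurableSet_Ioc).mpr
            (Filter.Eventually.of_forall fun t ht => ?_)
          have ht0 : 0 < t := ht.1
          have hGb := ih (n+1) (by omega) h1 (s * t)
          rw [Real.norm_eq_abs, abs_mul, abs_of_pos (by positivity : (0:ℝ) < t ^ n)]
          calc t ^ n * |G (n+1) (s * t)| ≤ t ^ n * 1 :=
                mul_le_mul_of_nonneg_left hGb (by positivity)
            _ = t ^ n := mul_one _
        have h := intervalIntegral.norm_integral_le_of_norm_le (by norm_num : (0:ℝ) ≤ 1)
          (by have := (MeasureTheory.ae_restrict_iff' measurableSet_uIoc).mp hae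
              rwa [Set.uIoc_of_le (by norm_num : (0:ℝ) ≤ 1)] at this) hg
        rw [Real.norm_eq_abs] at h
        refine h.trans ?_
        rw [integral_pow]
        norm_num
      rw [abs_mul, Nat.abs_cast]
      calc ((n+1 : ℕ) : ℝ) * |∫ u in (0:ℝ)..1, u ^ n * G (n+1) (s * u)|
          ≤ ((n+1 : ℕ) : ℝ) * (1 / ((n:ℝ) + 1)) :=
            mul_le_mul_of_nonneg_left hIb (Nat.cast_nonneg _)
        _ = 1 := by push_cast; field_simp
    | 0, _ => omega

/-- `G_N` is bounded on the real line. -/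
theorem stmt10 (N : ℕ) (hN : 1 ≤ N) :
    ∃ M : ℝ, 0 < M ∧ ∀ s : ℝ, |G N s| ≤ M := by
  exact ⟨1, one_pos, G_le_one N hN⟩
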